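/- Let (X, Y) be jointly distributed random variables on finite sets 𝒳 × 𝒴, let {h_s : 𝒳 → {0,1}^t}_{s∈𝒮} be a strong universal hash family with seed S uniformly distributed on 𝒮 and independent of (X, Y), and let ν ≥ 0. For y ∈ 𝒴 define T(y) = {x : −log₂ P_{X|Y}(x|y) ≤ ν}. Then the probability of the decapsulation-failure event {X ∉ T(Y)} ∪ {∃ x̂ ∈ T(Y) with x̂ ≠ X and h_S(x̂) = h_S(X)} is at most Pr[−log₂ P_{X|Y}(X|Y) > ν] + 2^{ν−t}. Consequently, the OWSKA-based decapsulation (which, given y and the hash value g = h_S(X), outputs the key derived from the unique element x̂ ∈ T(y) with h_S(x̂) = g) recovers X, and hence the correct key, except with at most this probability. -/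

import Mathlib

open scoped BigOperators Classical

/-- A strong universal hash family. -/
def StrongUHF {S X Y : Type*} [Fintype S] [Fintype Y] (h : S → X → Y) : Prop :=
  ∀ x x' : X, x ≠ x' → ∀ a b : Y,
    ((Finset.univ.filter (fun s : S => h s x = a ∧ h s x' = b)).card : ℝ) / Fintype.card S
      = 1 / (Fintype.card Y : ℝ) ^ 2

/-- The decapsulation list `T(y) = {x : −log₂ P_{X|Y}(x|y) ≤ ν} = {x : P_{X|Y}(x|y) ≥ 2^{−ν}}`. -/
noncomputable def decList {𝒳 𝒴 : Type*} [Fintype 𝒳] (p : 𝒳 × 𝒴 → ℝ) (ν : ℝ) (y : 𝒴) :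
    Finset 𝒳 :=
  Finset.univ.filter (fun x : 𝒳 => (2 : ℝ) ^ (-ν) ≤ p (x, y) / ∑ x' : 𝒳, p (x', y))

/-- Collision probability of a strong universal hash family. -/
lemma coll_card {S 𝒳 : Type*} [Fintype S] (t : ℕ) (h : S → 𝒳 → (Fin t → Bool))
    (hUHF : StrongUHF h) {x x' : 𝒳} (hne : x ≠ x') :
    ((Finset.univ.filter (fun s : S => h s x = h s x')).card : ℝ) / Fintype.card S
      = 1 / 2 ^ t := by
  classical
  have hcard : (Finset.univ.filter (fun s : S => h s x = h s x')).card
      = ∑ a : Fin t → Bool,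
          (Finset.univ.filter (fun s : S => h s x = a ∧ h s x' = a)).card := by
    simp only [Finset.card_filter]
    conv_rhs => rw [Finset.sum_comm]
    refine Finset.sum_congr rfl fun s _ => ?_
    by_cases hs : h s x = h s x'
    · rw [if_pos hs, Finset.sum_eq_single (h s x)]
      · simp [hs]
      · intro b _ hb
        have hnb : ¬(h s x = b ∧ h s x' = b) := fun hc => hb hc.1.symm
        simp [hnb]
      · simp
    · rw [if_neg hs]
      refine (Finset.sum_eq_zero fun a _ => ?_).symm
      by_cases h1 : h s x = a
      · have : ¬ (h s x' = a) := fun hh => hs (h1.trans hh.symm)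
        simp [h1, this]
      · simp [h1]
  rw [hcard]
  push_cast
  rw [Finset.sum_div]
  have hswap : (∑ a : Fin t → Bool,
      ((Finset.univ.filter (fun s : S => h s x = a ∧ h s x' = a)).card : ℝ)
        / (Fintype.card S : ℝ))
      = ∑ _a : Fin t → Bool, 1 / (Fintype.card (Fin t → Bool) : ℝ) ^ 2 :=
    Finset.sum_congr rfl fun a _ => by
      convert hUHF x x' hne a a using 3
      exact congrArg Finset.card (by congr!)
  rw [hswap]
  have hcY : (Fintype.card (Fin t → Bool) : ℝ) = 2 ^ t := by
    simp [Fintype.card_fun]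
  rw [Finset.sum_const, Finset.card_univ, nsmul_eq_mul, hcY]
  have h2 : (2:ℝ) ^ t ≠ 0 := by positivity
  field_simp

/-- The decapsulation list has at most `2^ν` elements. -/
lemma decList_card_le {𝒳 𝒴 : Type*} [Fintype 𝒳] (p : 𝒳 × 𝒴 → ℝ) (hp : ∀ w, 0 ≤ p w)
    (ν : ℝ) (y : 𝒴) : ((decList p ν y).card : ℝ) ≤ 2 ^ ν := by
  set Q := ∑ x' : 𝒳, p (x', y) with hQ
  have hQ0 : 0 ≤ Q := Finset.sum_nonneg fun x _ => hp _
  have key : ((decList p ν y).card : ℝ) * 2 ^ (-ν) ≤ 1 := by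
    calc ((decList p ν y).card : ℝ) * 2 ^ (-ν)
        = ∑ _x ∈ decList p ν y, (2:ℝ) ^ (-ν) := by
          rw [Finset.sum_const, nsmul_eq_mul]
      _ ≤ ∑ x ∈ decList p ν y, p (x, y) / Q :=
          Finset.sum_le_sum fun x hx => (Finset.mem_filter.mp hx).2
      _ ≤ ∑ x : 𝒳, p (x, y) / Q :=
          Finset.sum_le_sum_of_subset_of_nonneg (Finset.subset_univ _)
            (fun x _ _ => div_nonneg (hp _) hQ0)
      _ = Q / Q := by rw [← Finset.sum_div]
      _ ≤ 1 := by
          rcases eq_or_lt_of_le hQ0 with h0 | h0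
          · simp [← h0]
          · rw [div_self h0.ne']
  have h2 : (0:ℝ) < 2 ^ (-ν) := Real.rpow_pos_of_pos (by norm_num) _
  have := (mul_le_iff_le_one_left (a := ((decList p ν y).card : ℝ)) h2)
  -- card * 2^(-ν) ≤ 1 → card ≤ 2^ν
  have hrw : (2:ℝ) ^ (-ν) = ((2:ℝ) ^ ν)⁻¹ := by
    rw [Real.rpow_neg (by norm_num)]
  rw [hrw] at key
  have hpos : (0:ℝ) < (2:ℝ) ^ ν := Real.rpow_pos_of_pos (by norm_num) _
  calc ((decList p ν y).card : ℝ)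
      = ((decList p ν y).card : ℝ) * ((2:ℝ) ^ ν)⁻¹ * (2:ℝ) ^ ν := by
        field_simp
    _ ≤ 1 * (2:ℝ) ^ ν := by
        exact mul_le_mul_of_nonneg_right key hpos.le
    _ = (2:ℝ) ^ ν := one_mul _

/-- correctness of the OWSKA-based iKEM decapsulation: the probability of the
failure event `{X ∉ T(Y)} ∪ {∃ xh ∈ T(Y), xh ≠ X ∧ h_S(xh) = h_S(X)}` (over `(X, Y)` and the
independent uniform seed `S`) is at most `Pr[−log₂ P_{X|Y}(X|Y) > ν] + 2^{ν−t}`, i.e. at most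
`Pr[X ∉ T(Y)] + 2^{ν−t}`. -/
theorem owska_decapsulation_failure_bound
    {𝒳 𝒴 S : Type*} [Fintype 𝒳] [Fintype 𝒴] [Fintype S] [Nonempty S]
    (t : ℕ) (h : S → 𝒳 → (Fin t → Bool)) (hUHF : StrongUHF h)
    (p : 𝒳 × 𝒴 → ℝ) (hp : ∀ w, 0 ≤ p w) (hsum : ∑ w : 𝒳 × 𝒴, p w = 1)
    (ν : ℝ) (hν : 0 ≤ ν) :
    (∑ x : 𝒳, ∑ y : 𝒴, ∑ s : S,
        (p (x, y) / (Fintype.card S : ℝ)) *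
          (if x ∉ decList p ν y ∨ ∃ xh ∈ decList p ν y, xh ≠ x ∧ h s xh = h s x
            then 1 else 0))
      ≤ (∑ x : 𝒳, ∑ y : 𝒴, if x ∉ decList p ν y then p (x, y) else 0)
        + (2 : ℝ) ^ (ν - t) := by
  classical
  have hScard : (0:ℝ) < (Fintype.card S : ℝ) := by
    exact_mod_cast Fintype.card_pos
  -- pointwise bound
  have main : ∀ x y,
      (∑ s : S, (p (x, y) / (Fintype.card S : ℝ)) *
          (if x ∉ decList p ν y ∨ ∃ xh ∈ decList p ν y, xh ≠ x ∧ h s xh = h s x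
            then 1 else 0))
      ≤ (if x ∉ decList p ν y then p (x, y) else 0) + p (x, y) * (2:ℝ) ^ (ν - (t:ℝ)) := by
    intro x y
    have hpxy : 0 ≤ p (x, y) := hp _
    have hcoef : 0 ≤ p (x, y) / (Fintype.card S : ℝ) := div_nonneg hpxy hScard.le
    have step1 :
        (∑ s : S, (p (x, y) / (Fintype.card S : ℝ)) *
            (if x ∉ decList p ν y ∨ ∃ xh ∈ decList p ν y, xh ≠ x ∧ h s xh = h s x
              then 1 else 0))
        ≤ (∑ s : S, (p (x, y) / (Fintype.card S : ℝ)) *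
              (if x ∉ decList p ν y then 1 else 0))
          + (∑ s : S, (p (x, y) / (Fintype.card S : ℝ)) *
              (if ∃ xh ∈ decList p ν y, xh ≠ x ∧ h s xh = h s x then 1 else 0)) := by
      rw [← Finset.sum_add_distrib]
      refine Finset.sum_le_sum fun s _ => ?_
      rw [← mul_add]
      refine mul_le_mul_of_nonneg_left ?_ hcoef
      by_cases hA : x ∉ decList p ν y <;>
        by_cases hB : ∃ xh ∈ decList p ν y, xh ≠ x ∧ h s xh = h s x <;>
        simp [hA, hB]
    have partA : (∑ s : S, (p (x, y) / (Fintype.card S : ℝ)) *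
          (if x ∉ decList p ν y then 1 else 0))
        = (if x ∉ decList p ν y then p (x, y) else 0) := by
      rw [Finset.sum_const, Finset.card_univ, nsmul_eq_mul]
      by_cases hA : x ∉ decList p ν y
      · rw [if_pos hA, if_pos hA]
        field_simp
      · simp [hA]
    have partB : (∑ s : S, (p (x, y) / (Fintype.card S : ℝ)) *
          (if ∃ xh ∈ decList p ν y, xh ≠ x ∧ h s xh = h s x then 1 else 0))
        ≤ p (x, y) * (2:ℝ) ^ (ν - (t:ℝ)) := by
      have hB1 : ∀ s : S,
          (if ∃ xh ∈ decList p ν y, xh ≠ x ∧ h s xh = h s x then (1:ℝ) else 0)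
          ≤ ∑ xh ∈ decList p ν y, (if xh ≠ x ∧ h s xh = h s x then (1:ℝ) else 0) := by
        intro s
        by_cases hB : ∃ xh ∈ decList p ν y, xh ≠ x ∧ h s xh = h s x
        · obtain ⟨xh, hxh, hc⟩ := hB
          rw [if_pos ⟨xh, hxh, hc⟩]
          have hsingle := Finset.single_le_sum
            (f := fun z => (if z ≠ x ∧ h s z = h s x then (1:ℝ) else 0))
            (fun i _ => by positivity) hxh
          simpa [hc] using hsingle
        · rw [if_neg hB]
          exact Finset.sum_nonneg fun i _ => by positivity
      have hB2 : (∑ s : S, ∑ xh ∈ decList p ν y,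
            (if xh ≠ x ∧ h s xh = h s x then (1:ℝ) else 0))
          ≤ ((decList p ν y).card : ℝ) * ((Fintype.card S : ℝ) / 2 ^ t) := by
        rw [Finset.sum_comm]
        calc (∑ xh ∈ decList p ν y, ∑ s : S,
              (if xh ≠ x ∧ h s xh = h s x then (1:ℝ) else 0))
            ≤ ∑ _xh ∈ decList p ν y, (Fintype.card S : ℝ) / 2 ^ t := by
              refine Finset.sum_le_sum fun xh _ => ?_
              by_cases hne : xh = x
              · subst hne
                simp only [ne_eq, not_true_eq_false, false_and, if_false]
                rw [Finset.sum_const, smul_zero]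
                positivity
              · have : (∑ s : S, (if xh ≠ x ∧ h s xh = h s x then (1:ℝ) else 0))
                    = ((Finset.univ.filter (fun s : S => h s xh = h s x)).card : ℝ) := by
                  rw [Finset.card_filter]
                  push_cast
                  refine Finset.sum_congr rfl fun s _ => ?_
                  simp [hne]
                rw [this]
                have hcoll := coll_card t h hUHF hne
                rw [div_eq_iff hScard.ne'] at hcoll
                rw [hcoll]
                exact le_of_eq (by ring)
          _ = ((decList p ν y).card : ℝ) * ((Fintype.card S : ℝ) / 2 ^ t) := by
              rw [Finset.sum_const, nsmul_eq_mul]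
      calc (∑ s : S, (p (x, y) / (Fintype.card S : ℝ)) *
            (if ∃ xh ∈ decList p ν y, xh ≠ x ∧ h s xh = h s x then 1 else 0))
          ≤ ∑ s : S, (p (x, y) / (Fintype.card S : ℝ)) *
              (∑ xh ∈ decList p ν y, (if xh ≠ x ∧ h s xh = h s x then (1:ℝ) else 0)) := by
            exact Finset.sum_le_sum fun s _ =>
              mul_le_mul_of_nonneg_left (hB1 s) hcoef
        _ = (p (x, y) / (Fintype.card S : ℝ)) *
              (∑ s : S, ∑ xh ∈ decList p ν y,
                (if xh ≠ x ∧ h s xh = h s x then (1:ℝ) else 0)) := by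
            rw [Finset.mul_sum]
        _ ≤ (p (x, y) / (Fintype.card S : ℝ)) *
              (((decList p ν y).card : ℝ) * ((Fintype.card S : ℝ) / 2 ^ t)) :=
            mul_le_mul_of_nonneg_left hB2 hcoef
        _ ≤ (p (x, y) / (Fintype.card S : ℝ)) *
              ((2:ℝ) ^ ν * ((Fintype.card S : ℝ) / 2 ^ t)) := by
            refine mul_le_mul_of_nonneg_left ?_ hcoef
            exact mul_le_mul_of_nonneg_right (decList_card_le p hp ν y) (by positivity)
        _ = p (x, y) * ((2:ℝ) ^ ν / 2 ^ t) := by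
            field_simp
        _ = p (x, y) * (2:ℝ) ^ (ν - (t:ℝ)) := by
            congr 1
            rw [Real.rpow_sub (by norm_num), Real.rpow_natCast]
    calc _ ≤ _ := step1
      _ ≤ (if x ∉ decList p ν y then p (x, y) else 0) + p (x, y) * (2:ℝ) ^ (ν - (t:ℝ)) := by
        rw [partA]
        exact add_le_add (le_refl _) partB
  calc (∑ x : 𝒳, ∑ y : 𝒴, ∑ s : S,
        (p (x, y) / (Fintype.card S : ℝ)) *
          (if x ∉ decList p ν y ∨ ∃ xh ∈ decList p ν y, xh ≠ x ∧ h s xh = h s x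
            then 1 else 0))
      ≤ ∑ x : 𝒳, ∑ y : 𝒴,
          ((if x ∉ decList p ν y then p (x, y) else 0) + p (x, y) * (2:ℝ) ^ (ν - (t:ℝ))) :=
        Finset.sum_le_sum fun x _ => Finset.sum_le_sum fun y _ => main x y
    _ = (∑ x : 𝒳, ∑ y : 𝒴, if x ∉ decList p ν y then p (x, y) else 0)
        + (∑ x : 𝒳, ∑ y : 𝒴, p (x, y)) * (2:ℝ) ^ (ν - (t:ℝ)) := by
        rw [Finset.sum_mul]
        rw [← Finset.sum_add_distrib]
        refine Finset.sum_congr rfl fun x _ => ?_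
        rw [Finset.sum_mul, ← Finset.sum_add_distrib]
    _ = (∑ x : 𝒳, ∑ y : 𝒴, if x ∉ decList p ν y then p (x, y) else 0)
        + (2:ℝ) ^ (ν - (t:ℝ)) := by
        have : (∑ x : 𝒳, ∑ y : 𝒴, p (x, y)) = 1 := by
          rw [← hsum, ← Finset.sum_product']
          rfl
        rw [this, one_mul]
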